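/- arXiv:1910.12255 — 2 statements merged into one kernel-verified Lean document; each statement's English description precedes it below -/
import Mathlib

section
/- Let X_i, X_j be real random variables on a common probability space such that the pair (X_i, X_j) is associated, let A > 0 and α ∈ (0,2). Then, with values in [0, +∞], I^A_α(X_i, X_j) ≤ √(I^A_α(X_i, X_i)) · √(I^A_α(X_j, X_j)). -/
open MeasureTheory Filter Topology

noncomputable section

namespace Paper

variable {Ω : Type*} [MeasurableSpace Ω]

/-- Partial sum `S_n = X_1 + … + X_n` (1-based indexing). -/
def partialSum (X : ℕ → Ω → ℝ) (n : ℕ) (ω : Ω) : ℝ := ∑ j ∈ Finset.Icc 1 n, X j ω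

/-- The law of the random vector `(X_1, …, X_N)`. -/
def lawVec (P : Measure Ω) (X : ℕ → Ω → ℝ) (N : ℕ) : Measure (Fin N → ℝ) :=
  P.map (fun ω (i : Fin N) => X (1 + (i : ℕ)) ω)

/-- Strict stationarity: `(X_{1+k},…,X_{N+k}) ~ (X_1,…,X_N)` for all `k, N`. -/
def StrictlyStationary (P : Measure Ω) (X : ℕ → Ω → ℝ) : Prop :=
  ∀ k N : ℕ, P.map (fun ω (i : Fin N) => X (1 + k + (i : ℕ)) ω) = lawVec P X N

/-- Covariance (as a formula `E[fg] − E[f]E[g]`). -/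
def cov (P : Measure Ω) (f g : Ω → ℝ) : ℝ :=
  (∫ ω, f ω * g ω ∂P) - (∫ ω, f ω ∂P) * (∫ ω, g ω ∂P)

/-- Bounded measurable functions that are non-decreasing in each coordinate. -/
def BddMono {n : ℕ} (f : (Fin n → ℝ) → ℝ) : Prop :=
  Measurable f ∧ (∃ C, ∀ x, |f x| ≤ C) ∧
    ∀ x y : Fin n → ℝ, (∀ i, x i ≤ y i) → f x ≤ f y

/-- Association of a finite random vector. -/
def AssociatedVec (P : Measure Ω) {n : ℕ} (V : Ω → Fin n → ℝ) : Prop :=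
  ∀ f g : (Fin n → ℝ) → ℝ, BddMono f → BddMono g →
    0 ≤ cov P (fun ω => f (V ω)) (fun ω => g (V ω))

/-- Association of a sequence: every finite subcollection is associated. -/
def AssociatedSeq (P : Measure Ω) (X : ℕ → Ω → ℝ) : Prop :=
  ∀ (n : ℕ) (idx : Fin n → ℕ), (∀ i, 1 ≤ idx i) → StrictMono idx →
    AssociatedVec P (fun ω i => X (idx i) ω)

/-- Association of a pair of random variables. -/
def AssociatedPair (P : Measure Ω) (Y Z : Ω → ℝ) : Prop :=
  AssociatedVec P (fun ω => ![Y ω, Z ω])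

/-- Convolution of two measures on an additive monoid. -/
def mconv {E : Type*} [MeasurableSpace E] [Add E] (μ ν : Measure E) : Measure E :=
  (μ.prod ν).map (fun p => p.1 + p.2)

/-- `μ` is an `α`-stable law: `a X' + b X'' ~ (a^α+b^α)^{1/α} X + d`. -/
def IsStableLaw {E : Type*} [MeasurableSpace E] [AddCommGroup E] [Module ℝ E]
    (α : ℝ) (μ : Measure E) : Prop :=
  ∀ a b : ℝ, 0 < a → 0 < b → ∃ d : E,
    mconv (μ.map (fun x => a • x)) (μ.map (fun x => b • x))
      = μ.map (fun x => (a ^ α + b ^ α) ^ (1 / α) • x + d)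

/-- `μ` is a strictly `α`-stable law. -/
def IsStrictlyStableLaw {E : Type*} [MeasurableSpace E] [AddCommGroup E] [Module ℝ E]
    (α : ℝ) (μ : Measure E) : Prop :=
  ∀ a b : ℝ, 0 < a → 0 < b →
    mconv (μ.map (fun x => a • x)) (μ.map (fun x => b • x))
      = μ.map (fun x => (a ^ α + b ^ α) ^ (1 / α) • x)

/-- A sequence is jointly `α`-stable if all finite-dimensional laws are `α`-stable. -/
def JointlyStable (P : Measure Ω) (X : ℕ → Ω → ℝ) (α : ℝ) : Prop :=
  ∀ N : ℕ, IsStableLaw α (lawVec P X N)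

/-- Convergence in distribution, via bounded continuous test functions. -/
def TendstoInDistribution {E : Type*} [MeasurableSpace E] [TopologicalSpace E]
    (P : Measure Ω) (Y : ℕ → Ω → E) (μ : Measure E) : Prop :=
  ∀ f : BoundedContinuousFunction E ℝ,
    Tendsto (fun n => ∫ ω, f (Y n ω) ∂P) atTop (𝓝 (∫ x, f x ∂μ))

/-- The truncation `f_a`. -/
def trunc (a x : ℝ) : ℝ := max (-a) (min a x)

/-- Regular variation at `+∞` with index `ρ`. -/
def RegularlyVarying (g : ℝ → ℝ) (ρ : ℝ) : Prop :=
  (∀ᶠ x in atTop, 0 < g x) ∧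
    ∀ c : ℝ, 0 < c → Tendsto (fun x => g (c * x) / g x) atTop (𝓝 (c ^ ρ))

/-- The Hoeffding function `H_{(Y,Z)}(x,y) = P(Y≤x, Z≤y) − P(Y≤x)P(Z≤y)`. -/
def Hfun (P : Measure Ω) (Y Z : Ω → ℝ) (x y : ℝ) : ℝ :=
  (P {ω | Y ω ≤ x ∧ Z ω ≤ y}).toReal -
    (P {ω | Y ω ≤ x}).toReal * (P {ω | Z ω ≤ y}).toReal

/-- A Lévy measure: no mass at `0` and `∫ min(‖x‖²,1) dν < ∞`. -/
def IsLevyMeasure {E : Type*} [MeasurableSpace E] [NormedAddCommGroup E]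
    (ν : Measure E) : Prop :=
  ν {0} = 0 ∧ (∫⁻ x, ENNReal.ofReal (min (‖x‖ ^ 2) 1) ∂ν) < ⊤

/-- `n E[h(V_n)] → ∫ h dν` for bounded continuous `h` vanishing near `0`. -/
def SmallVagueTendsto {E : Type*} [MeasurableSpace E] [NormedAddCommGroup E]
    (P : Measure Ω) (V : ℕ → Ω → E) (ν : Measure E) : Prop :=
  ∀ h : E → ℝ, Continuous h → (∃ C, ∀ x, |h x| ≤ C) →
    (∃ ε > 0, ∀ x, ‖x‖ < ε → h x = 0) →
    Tendsto (fun n : ℕ => (n : ℝ) * ∫ ω, h (V n ω) ∂P) atTop (𝓝 (∫ x, h x ∂ν))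

/-- Standing assumptions (A1)–(A4). -/
structure Standing (P : Measure Ω) (X : ℕ → Ω → ℝ) (α : ℝ) (B : ℕ → ℝ)
    (ν : (N : ℕ) → Measure (Fin N → ℝ)) : Prop where
  meas : ∀ j, Measurable (X j)
  alpha_pos : 0 < α
  alpha_lt_two : α < 2
  tail : ∃ ℓ : ℝ → ℝ, RegularlyVarying ℓ 0 ∧
    ∀ x : ℝ, 0 < x → (P {ω | x < |X 1 ω|}).toReal = x ^ (-α) * ℓ x
  B_pos : ∀ n, 0 < B n
  B_norm : Tendsto (fun n : ℕ => (n : ℝ) * (P {ω | B n < |X 1 ω|}).toReal) atTop (𝓝 1)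
  levy : ∀ N, IsLevyMeasure (ν N)
  vague : ∀ N : ℕ, SmallVagueTendsto P (fun n ω (i : Fin N) => X (1 + (i : ℕ)) ω / B n) (ν N)
  symm : α = 1 → ∀ N, lawVec P X N = P.map (fun ω (i : Fin N) => -X (1 + (i : ℕ)) ω)
  mean_zero : 1 < α → Integrable (X 1) P ∧ (∫ ω, X 1 ω ∂P) = 0

/-- The limit measures `ν_{{1,j}}` for the pairs `(X_1, X_j)`. -/
def PairLevy (P : Measure Ω) (X : ℕ → Ω → ℝ) (B : ℕ → ℝ)
    (ν2 : ℕ → Measure (ℝ × ℝ)) : Prop :=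
  ∀ j : ℕ, 2 ≤ j → IsLevyMeasure (ν2 j) ∧
    SmallVagueTendsto P (fun n ω => (X 1 ω / B n, X j ω / B n)) (ν2 j)

/-- Assumption (A5). -/
def SumCovAssumption (P : Measure Ω) (X : ℕ → Ω → ℝ) (B : ℕ → ℝ)
    (ν2 : ℕ → Measure (ℝ × ℝ)) : Prop :=
  (∀ a : ℝ, 0 < a → Summable (fun j : ℕ =>
      cov P (fun ω => trunc a (X 1 ω)) (fun ω => trunc a (X (j + 2) ω)))) ∧
  (∃ ρ : ℝ, RegularlyVarying (fun a => ∑' j : ℕ,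
      cov P (fun ω => trunc a (X 1 ω)) (fun ω => trunc a (X (j + 2) ω))) ρ) ∧
  Summable (fun j : ℕ => ∫ p : ℝ × ℝ, trunc 1 p.1 * trunc 1 p.2 ∂(ν2 (j + 2))) ∧
  Tendsto (fun n : ℕ => (n : ℝ) * ∑' j : ℕ,
      cov P (fun ω => trunc 1 (X 1 ω / B n)) (fun ω => trunc 1 (X (j + 2) ω / B n)))
    atTop (𝓝 (∑' j : ℕ, ∫ p : ℝ × ℝ, trunc 1 p.1 * trunc 1 p.2 ∂(ν2 (j + 2))))


/-- The coefficient `I^A_α(Y,Z) = sup_{a ≥ A} a^{α−2} ∫_{−a}^{a}∫_{−a}^{a} H_{(Y,Z)}(x,y) dx dy`,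
with values in `[0,∞]`. -/
def Icoef {Ω : Type*} [MeasurableSpace Ω] (P : Measure Ω) (Y Z : Ω → ℝ) (A α : ℝ) : ENNReal :=
  ⨆ a : {a : ℝ // A ≤ a}, ENNReal.ofReal ((a : ℝ) ^ (α - 2)) *
    ∫⁻ x in Set.Ioc (-(a : ℝ)) (a : ℝ), ∫⁻ y in Set.Ioc (-(a : ℝ)) (a : ℝ),
      ENNReal.ofReal (Hfun P Y Z x y)


section Statement6Aux

variable {Ω' : Type*} [MeasurableSpace Ω']

private lemma bdd_integrable {μ : Measure Ω'} [IsFiniteMeasure μ] {f : Ω' → ℝ}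
    (hf : AEStronglyMeasurable f μ) {C : ℝ} (h : ∀ x, |f x| ≤ C) : Integrable f μ :=
  (integrable_const C).mono' hf (Filter.Eventually.of_forall fun x => by
    rw [Real.norm_eq_abs]; exact h x)

private lemma meas_ind {γ : Type*} [MeasurableSpace γ] {V W : γ → ℝ}
    (hV : Measurable V) (hW : Measurable W) :
    Measurable fun c => if V c ≤ W c then (1:ℝ) else 0 :=
  Measurable.ite (measurableSet_le hV hW) measurable_const measurable_const

private lemma integral_ite (P : Measure Ω') [IsProbabilityMeasure P] {p : Ω' → Prop}
    [DecidablePred p] (hs : MeasurableSet {ω | p ω}) :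
    ∫ ω, (if p ω then (1:ℝ) else 0) ∂P = (P {ω | p ω}).toReal := by
  have h : (fun ω => if p ω then (1:ℝ) else 0) = Set.indicator {ω | p ω} (fun _ => (1:ℝ)) := by
    funext ω
    by_cases hp : p ω <;> simp [hp, Set.indicator_apply]
  rw [h, MeasureTheory.integral_indicator hs]
  simp [measureReal_def]

private lemma toReal_prob_le_one (P : Measure Ω') [IsProbabilityMeasure P] (s : Set Ω') :
    (P s).toReal ≤ 1 := by
  have h := ENNReal.toReal_mono (ENNReal.one_ne_top) (prob_le_one (μ := P) (s := s))
  simpa using h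

private lemma sym_cov (P : Measure Ω') [IsProbabilityMeasure P] {f g : Ω' → ℝ}
    (hf : Measurable f) (hg : Measurable g) {C : ℝ}
    (hbf : ∀ ω, |f ω| ≤ C) (hbg : ∀ ω, |g ω| ≤ C) :
    ∫ q : Ω' × Ω', (f q.1 - f q.2) * (g q.1 - g q.2) ∂(P.prod P)
      = 2 * ((∫ ω, f ω * g ω ∂P) - (∫ ω, f ω ∂P) * (∫ ω, g ω ∂P)) := by
  have mf1 : Measurable fun q : Ω' × Ω' => f q.1 := hf.comp measurable_fst
  have mf2 : Measurable fun q : Ω' × Ω' => f q.2 := hf.comp measurable_snd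
  have mg1 : Measurable fun q : Ω' × Ω' => g q.1 := hg.comp measurable_fst
  have mg2 : Measurable fun q : Ω' × Ω' => g q.2 := hg.comp measurable_snd
  have bnd : ∀ (u v : Ω' × Ω' → ℝ), (∀ q, |u q| ≤ C) → (∀ q, |v q| ≤ C) →
      ∀ q, |u q * v q| ≤ C * C := fun u v hu hv q => by
    rw [abs_mul]
    exact mul_le_mul (hu q) (hv q) (abs_nonneg _) ((abs_nonneg _).trans (hu q))
  have i11 : Integrable (fun q : Ω' × Ω' => f q.1 * g q.1) (P.prod P) :=
    bdd_integrable (mf1.mul mg1).aestronglyMeasurable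
      (bnd _ _ (fun q => hbf q.1) (fun q => hbg q.1))
  have i12 : Integrable (fun q : Ω' × Ω' => f q.1 * g q.2) (P.prod P) :=
    bdd_integrable (mf1.mul mg2).aestronglyMeasurable
      (bnd _ _ (fun q => hbf q.1) (fun q => hbg q.2))
  have i21 : Integrable (fun q : Ω' × Ω' => f q.2 * g q.1) (P.prod P) :=
    bdd_integrable (mf2.mul mg1).aestronglyMeasurable
      (bnd _ _ (fun q => hbf q.2) (fun q => hbg q.1))
  have i22 : Integrable (fun q : Ω' × Ω' => f q.2 * g q.2) (P.prod P) :=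
    bdd_integrable (mf2.mul mg2).aestronglyMeasurable
      (bnd _ _ (fun q => hbf q.2) (fun q => hbg q.2))
  have e11 : ∫ q : Ω' × Ω', f q.1 * g q.1 ∂(P.prod P) = ∫ ω, f ω * g ω ∂P := by
    have h := MeasureTheory.integral_prod_mul (μ := P) (ν := P)
      (fun ω => f ω * g ω) (fun _ => (1:ℝ))
    simpa using h
  have e22 : ∫ q : Ω' × Ω', f q.2 * g q.2 ∂(P.prod P) = ∫ ω, f ω * g ω ∂P := by
    have h := MeasureTheory.integral_prod_mul (μ := P) (ν := P)
      (fun _ => (1:ℝ)) (fun ω => f ω * g ω)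
    simpa using h
  have e12 : ∫ q : Ω' × Ω', f q.1 * g q.2 ∂(P.prod P)
      = (∫ ω, f ω ∂P) * (∫ ω, g ω ∂P) := MeasureTheory.integral_prod_mul f g
  have e21 : ∫ q : Ω' × Ω', f q.2 * g q.1 ∂(P.prod P)
      = (∫ ω, f ω ∂P) * (∫ ω, g ω ∂P) := by
    have h : (fun q : Ω' × Ω' => f q.2 * g q.1) = fun q : Ω' × Ω' => g q.1 * f q.2 := by
      funext q; ring
    rw [h, MeasureTheory.integral_prod_mul g f]; ring
  have expand : (fun q : Ω' × Ω' => (f q.1 - f q.2) * (g q.1 - g q.2))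
      = fun q : Ω' × Ω' => f q.1 * g q.1 - f q.1 * g q.2 - f q.2 * g q.1 + f q.2 * g q.2 := by
    funext q; ring
  have H3 : Integrable (fun q : Ω' × Ω' => f q.1 * g q.1 - f q.1 * g q.2) (P.prod P) :=
    i11.sub i12
  have H4 : Integrable
      (fun q : Ω' × Ω' => f q.1 * g q.1 - f q.1 * g q.2 - f q.2 * g q.1) (P.prod P) :=
    H3.sub i21
  rw [expand, integral_add H4 i22, integral_sub H3 i21, integral_sub i11 i12,
    e11, e12, e21, e22]
  ring

private lemma Hfun_eq_cov (P : Measure Ω') [IsProbabilityMeasure P] {Y Z : Ω' → ℝ}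
    (hY : Measurable Y) (hZ : Measurable Z) (x y : ℝ) :
    Hfun P Y Z x y = (∫ ω, (if Y ω ≤ x then (1:ℝ) else 0) * (if Z ω ≤ y then (1:ℝ) else 0) ∂P)
      - (∫ ω, (if Y ω ≤ x then (1:ℝ) else 0) ∂P) * (∫ ω, (if Z ω ≤ y then (1:ℝ) else 0) ∂P) := by
  have h1 : (fun ω => (if Y ω ≤ x then (1:ℝ) else 0) * (if Z ω ≤ y then (1:ℝ) else 0))
      = fun ω => if Y ω ≤ x ∧ Z ω ≤ y then (1:ℝ) else 0 := by
    funext ω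
    by_cases h1 : Y ω ≤ x <;> by_cases h2 : Z ω ≤ y <;> simp [h1, h2]
  have hsxy : MeasurableSet {ω | Y ω ≤ x ∧ Z ω ≤ y} :=
    (measurableSet_le hY measurable_const).inter (measurableSet_le hZ measurable_const)
  have hsx : MeasurableSet {ω | Y ω ≤ x} := measurableSet_le hY measurable_const
  have hsy : MeasurableSet {ω | Z ω ≤ y} := measurableSet_le hZ measurable_const
  unfold Hfun
  rw [h1, integral_ite P hsxy, integral_ite P hsx, integral_ite P hsy]

private lemma abs_ite_le {p : Prop} [Decidable p] : |if p then (1:ℝ) else 0| ≤ 1 := by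
  split_ifs <;> norm_num

private lemma abs_ite_sub_le {p q : Prop} [Decidable p] [Decidable q] :
    |(if p then (1:ℝ) else 0) - (if q then (1:ℝ) else 0)| ≤ 2 := by
  split_ifs <;> norm_num

private lemma Hfun_symm_rep (P : Measure Ω') [IsProbabilityMeasure P] {Y Z : Ω' → ℝ}
    (hY : Measurable Y) (hZ : Measurable Z) (x y : ℝ) :
    Hfun P Y Z x y = (1/2) * ∫ q : Ω' × Ω',
      ((if Y q.1 ≤ x then (1:ℝ) else 0) - (if Y q.2 ≤ x then (1:ℝ) else 0)) *
      ((if Z q.1 ≤ y then (1:ℝ) else 0) - (if Z q.2 ≤ y then (1:ℝ) else 0)) ∂(P.prod P) := by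
  have h : ∫ q : Ω' × Ω',
      ((if Y q.1 ≤ x then (1:ℝ) else 0) - (if Y q.2 ≤ x then (1:ℝ) else 0)) *
      ((if Z q.1 ≤ y then (1:ℝ) else 0) - (if Z q.2 ≤ y then (1:ℝ) else 0)) ∂(P.prod P)
      = 2 * ((∫ ω, (if Y ω ≤ x then (1:ℝ) else 0) * (if Z ω ≤ y then (1:ℝ) else 0) ∂P)
        - (∫ ω, (if Y ω ≤ x then (1:ℝ) else 0) ∂P) * (∫ ω, (if Z ω ≤ y then (1:ℝ) else 0) ∂P)) :=
    sym_cov P (meas_ind hY measurable_const) (meas_ind hZ measurable_const)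
      (C := 1) (fun ω => abs_ite_le) (fun ω => abs_ite_le)
  rw [h, Hfun_eq_cov P hY hZ x y]
  ring

private lemma integral_ind_Ioc {a t : ℝ} (ha : 0 < a) :
    ∫ x in Set.Ioc (-a) a, (if t ≤ x then (1:ℝ) else 0) = a - trunc a t := by
  have h1 : (fun x => if t ≤ x then (1:ℝ) else 0) = (Set.Ici t).indicator (fun _ => (1:ℝ)) := by
    funext x; simp [Set.indicator_apply, Set.mem_Ici]
  rw [h1, MeasureTheory.setIntegral_indicator measurableSet_Ici, setIntegral_const, measureReal_def,
    smul_eq_mul, mul_one]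
  unfold trunc
  rcases le_or_gt t (-a) with h | h
  · have hs : Set.Ioc (-a) a ∩ Set.Ici t = Set.Ioc (-a) a :=
      Set.inter_eq_left.mpr fun z hz => le_trans h (le_of_lt hz.1)
    have hm : max (-a) (min a t) = -a := by
      rw [min_eq_right (by linarith : t ≤ a)]; exact max_eq_left h
    rw [hs, Real.volume_Ioc, ENNReal.toReal_ofReal (by linarith), hm]
  · rcases le_or_gt t a with h2 | h2
    · have hs : Set.Ioc (-a) a ∩ Set.Ici t = Set.Icc t a := by
        ext z
        simp only [Set.mem_inter_iff, Set.mem_Ioc, Set.mem_Ici, Set.mem_Icc]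
        constructor
        · rintro ⟨⟨_, hz2⟩, hz3⟩; exact ⟨hz3, hz2⟩
        · rintro ⟨hz1, hz2⟩; exact ⟨⟨lt_of_lt_of_le h hz1, hz2⟩, hz1⟩
      have hm : max (-a) (min a t) = t := by
        rw [min_eq_right h2]; exact max_eq_right h.le
      rw [hs, Real.volume_Icc, ENNReal.toReal_ofReal (by linarith), hm]
    · have hs : Set.Ioc (-a) a ∩ Set.Ici t = ∅ := by
        ext z
        simp only [Set.mem_inter_iff, Set.mem_Ioc, Set.mem_Ici, Set.mem_empty_iff_false,
          iff_false, not_and]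
        rintro ⟨_, hz2⟩ hz3; linarith
      have hm : max (-a) (min a t) = a := by
        rw [min_eq_left h2.le]; exact max_eq_right (by linarith)
      rw [hs, hm]
      simp

private lemma meas_trunc {a : ℝ} : Measurable (trunc a) := by
  unfold trunc
  exact measurable_const.max (measurable_const.min measurable_id)

private lemma abs_trunc_le {a : ℝ} (ha : 0 < a) (t : ℝ) : |trunc a t| ≤ a := by
  unfold trunc
  rw [abs_le]
  constructor
  · exact le_max_left _ _
  · exact max_le (by linarith) (min_le_left _ _)

private lemma finMeasIoc {a : ℝ} : IsFiniteMeasure (volume.restrict (Set.Ioc (-a) a)) :=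
  ⟨by rw [Measure.restrict_apply_univ]; exact measure_Ioc_lt_top⟩

private lemma double_eq (P : Measure Ω') [IsProbabilityMeasure P] {Y Z : Ω' → ℝ}
    (hY : Measurable Y) (hZ : Measurable Z) {a : ℝ} (ha : 0 < a) :
    ∫ x in Set.Ioc (-a) a, ∫ y in Set.Ioc (-a) a, Hfun P Y Z x y
      = (1/2) * ∫ q : Ω' × Ω',
          (trunc a (Y q.2) - trunc a (Y q.1)) * (trunc a (Z q.2) - trunc a (Z q.1))
          ∂(P.prod P) := by
  haveI : IsFiniteMeasure (volume.restrict (Set.Ioc (-a) a)) := finMeasIoc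
  set I := Set.Ioc (-a) a with hIdef
  -- the generic inner computation
  have key : ∀ (W : Ω' → ℝ) (q : Ω' × Ω'),
      ∫ s in I, ((if W q.1 ≤ s then (1:ℝ) else 0) - (if W q.2 ≤ s then (1:ℝ) else 0))
        = trunc a (W q.2) - trunc a (W q.1) := by
    intro W q
    have i1 : Integrable (fun s => if W q.1 ≤ s then (1:ℝ) else 0) (volume.restrict I) :=
      bdd_integrable (meas_ind measurable_const measurable_id).aestronglyMeasurable
        (C := 1) (fun _ => abs_ite_le)
    have i2 : Integrable (fun s => if W q.2 ≤ s then (1:ℝ) else 0) (volume.restrict I) :=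
      bdd_integrable (meas_ind measurable_const measurable_id).aestronglyMeasurable
        (C := 1) (fun _ => abs_ite_le)
    rw [integral_sub i1 i2, integral_ind_Ioc ha, integral_ind_Ioc ha]
    ring
  have mB : ∀ (W : Ω' → ℝ), Measurable W → Measurable (fun p : ℝ × (Ω' × Ω') =>
      ((if W p.2.1 ≤ p.1 then (1:ℝ) else 0) - (if W p.2.2 ≤ p.1 then (1:ℝ) else 0))) :=
    fun W hW => (meas_ind (hW.comp (measurable_fst.comp measurable_snd)) measurable_fst).sub
      (meas_ind (hW.comp (measurable_snd.comp measurable_snd)) measurable_fst)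
  have mtr : ∀ (W : Ω' → ℝ), Measurable W → Measurable (fun q : Ω' × Ω' =>
      trunc a (W q.2) - trunc a (W q.1)) := fun W hW =>
    ((meas_trunc.comp (hW.comp measurable_snd)).sub (meas_trunc.comp (hW.comp measurable_fst)))
  have step1 : ∀ x : ℝ, ∫ y in I, Hfun P Y Z x y
      = (1/2) * ∫ q : Ω' × Ω',
          ((if Y q.1 ≤ x then (1:ℝ) else 0) - (if Y q.2 ≤ x then (1:ℝ) else 0)) *
          (trunc a (Z q.2) - trunc a (Z q.1)) ∂(P.prod P) := by
    intro x
    have hswap : Integrable (Function.uncurry fun (y : ℝ) (q : Ω' × Ω') =>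
        ((if Y q.1 ≤ x then (1:ℝ) else 0) - (if Y q.2 ≤ x then (1:ℝ) else 0)) *
        ((if Z q.1 ≤ y then (1:ℝ) else 0) - (if Z q.2 ≤ y then (1:ℝ) else 0)))
        ((volume.restrict I).prod (P.prod P)) := by
      have hmeq : Function.uncurry (fun (y : ℝ) (q : Ω' × Ω') =>
          ((if Y q.1 ≤ x then (1:ℝ) else 0) - (if Y q.2 ≤ x then (1:ℝ) else 0)) *
          ((if Z q.1 ≤ y then (1:ℝ) else 0) - (if Z q.2 ≤ y then (1:ℝ) else 0)))
          = fun p : ℝ × (Ω' × Ω') =>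
          ((if Y p.2.1 ≤ x then (1:ℝ) else 0) - (if Y p.2.2 ≤ x then (1:ℝ) else 0)) *
          ((if Z p.2.1 ≤ p.1 then (1:ℝ) else 0) - (if Z p.2.2 ≤ p.1 then (1:ℝ) else 0)) := rfl
      rw [hmeq]
      refine bdd_integrable ?_ (C := 4) ?_
      · exact (((meas_ind (hY.comp (measurable_fst.comp measurable_snd)) measurable_const).sub
          (meas_ind (hY.comp (measurable_snd.comp measurable_snd)) measurable_const)).mul
          (mB Z hZ)).aestronglyMeasurable
      · intro p
        rw [abs_mul]
        have h := mul_le_mul (abs_ite_sub_le (p := Y p.2.1 ≤ x) (q := Y p.2.2 ≤ x))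
          (abs_ite_sub_le (p := Z p.2.1 ≤ p.1) (q := Z p.2.2 ≤ p.1))
          (abs_nonneg _) (by norm_num : (0:ℝ) ≤ 2)
        linarith
    calc ∫ y in I, Hfun P Y Z x y
        = ∫ y in I, (1/2) * ∫ q : Ω' × Ω',
            ((if Y q.1 ≤ x then (1:ℝ) else 0) - (if Y q.2 ≤ x then (1:ℝ) else 0)) *
            ((if Z q.1 ≤ y then (1:ℝ) else 0) - (if Z q.2 ≤ y then (1:ℝ) else 0))
            ∂(P.prod P) := by
          apply integral_congr_ae
          exact Filter.Eventually.of_forall fun y => Hfun_symm_rep P hY hZ x y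
      _ = (1/2) * ∫ y in I, ∫ q : Ω' × Ω',
            ((if Y q.1 ≤ x then (1:ℝ) else 0) - (if Y q.2 ≤ x then (1:ℝ) else 0)) *
            ((if Z q.1 ≤ y then (1:ℝ) else 0) - (if Z q.2 ≤ y then (1:ℝ) else 0))
            ∂(P.prod P) := integral_const_mul _ _
      _ = (1/2) * ∫ q : Ω' × Ω', (∫ y in I,
            ((if Y q.1 ≤ x then (1:ℝ) else 0) - (if Y q.2 ≤ x then (1:ℝ) else 0)) *
            ((if Z q.1 ≤ y then (1:ℝ) else 0) - (if Z q.2 ≤ y then (1:ℝ) else 0))) ∂(P.prod P) :=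
          congrArg (fun t : ℝ => (1/2) * t) (MeasureTheory.integral_integral_swap hswap)
      _ = (1/2) * ∫ q : Ω' × Ω',
            ((if Y q.1 ≤ x then (1:ℝ) else 0) - (if Y q.2 ≤ x then (1:ℝ) else 0)) *
            (trunc a (Z q.2) - trunc a (Z q.1)) ∂(P.prod P) := by
          congr 1
          apply integral_congr_ae
          refine Filter.Eventually.of_forall fun q => ?_
          simp only [integral_const_mul]
          rw [key Z q]
  have hswap2 : Integrable (Function.uncurry fun (x : ℝ) (q : Ω' × Ω') =>
      ((if Y q.1 ≤ x then (1:ℝ) else 0) - (if Y q.2 ≤ x then (1:ℝ) else 0)) *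
      (trunc a (Z q.2) - trunc a (Z q.1)))
      ((volume.restrict I).prod (P.prod P)) := by
    have hmeq : Function.uncurry (fun (x : ℝ) (q : Ω' × Ω') =>
        ((if Y q.1 ≤ x then (1:ℝ) else 0) - (if Y q.2 ≤ x then (1:ℝ) else 0)) *
        (trunc a (Z q.2) - trunc a (Z q.1)))
        = fun p : ℝ × (Ω' × Ω') =>
        ((if Y p.2.1 ≤ p.1 then (1:ℝ) else 0) - (if Y p.2.2 ≤ p.1 then (1:ℝ) else 0)) *
        (trunc a (Z p.2.2) - trunc a (Z p.2.1)) := rfl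
    rw [hmeq]
    refine bdd_integrable ?_ (C := 2 * (a + a)) ?_
    · exact ((mB Y hY).mul ((mtr Z hZ).comp measurable_snd)).aestronglyMeasurable
    · intro p
      rw [abs_mul]
      have h1 : |(if Y p.2.1 ≤ p.1 then (1:ℝ) else 0) - (if Y p.2.2 ≤ p.1 then (1:ℝ) else 0)|
          ≤ 2 := abs_ite_sub_le
      have h2 : |trunc a (Z p.2.2) - trunc a (Z p.2.1)| ≤ a + a :=
        (abs_sub _ _).trans (add_le_add (abs_trunc_le ha _) (abs_trunc_le ha _))
      exact mul_le_mul h1 h2 (abs_nonneg _) (by norm_num)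
  calc ∫ x in I, ∫ y in I, Hfun P Y Z x y
      = ∫ x in I, (1/2) * ∫ q : Ω' × Ω',
          ((if Y q.1 ≤ x then (1:ℝ) else 0) - (if Y q.2 ≤ x then (1:ℝ) else 0)) *
          (trunc a (Z q.2) - trunc a (Z q.1)) ∂(P.prod P) := by
        apply integral_congr_ae
        exact Filter.Eventually.of_forall fun x => step1 x
    _ = (1/2) * ∫ x in I, ∫ q : Ω' × Ω',
          ((if Y q.1 ≤ x then (1:ℝ) else 0) - (if Y q.2 ≤ x then (1:ℝ) else 0)) *
          (trunc a (Z q.2) - trunc a (Z q.1)) ∂(P.prod P) := integral_const_mul _ _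
    _ = (1/2) * ∫ q : Ω' × Ω', (∫ x in I,
          ((if Y q.1 ≤ x then (1:ℝ) else 0) - (if Y q.2 ≤ x then (1:ℝ) else 0)) *
          (trunc a (Z q.2) - trunc a (Z q.1))) ∂(P.prod P) :=
        congrArg (fun t : ℝ => (1/2) * t) (MeasureTheory.integral_integral_swap hswap2)
    _ = (1/2) * ∫ q : Ω' × Ω',
          (trunc a (Y q.2) - trunc a (Y q.1)) * (trunc a (Z q.2) - trunc a (Z q.1))
          ∂(P.prod P) := by
        congr 1
        apply integral_congr_ae
        refine Filter.Eventually.of_forall fun q => ?_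
        simp only [integral_mul_const]
        rw [key Y q]

private lemma Hfun_abs_le_one (P : Measure Ω') [IsProbabilityMeasure P] (Y Z : Ω' → ℝ)
    (x y : ℝ) : |Hfun P Y Z x y| ≤ 1 := by
  unfold Hfun
  have h1 := toReal_prob_le_one P {ω | Y ω ≤ x ∧ Z ω ≤ y}
  have h2 := toReal_prob_le_one P {ω | Y ω ≤ x}
  have h3 := toReal_prob_le_one P {ω | Z ω ≤ y}
  have h4 : 0 ≤ (P {ω | Y ω ≤ x ∧ Z ω ≤ y}).toReal := ENNReal.toReal_nonneg
  have h5 : 0 ≤ (P {ω | Y ω ≤ x}).toReal := ENNReal.toReal_nonneg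
  have h6 : 0 ≤ (P {ω | Z ω ≤ y}).toReal := ENNReal.toReal_nonneg
  rw [abs_le]
  constructor <;> nlinarith

private lemma Hfun_self_nonneg (P : Measure Ω') [IsProbabilityMeasure P] (Y : Ω' → ℝ)
    (x y : ℝ) : 0 ≤ Hfun P Y Y x y := by
  unfold Hfun
  rcases le_total x y with h | h
  · have hs : {ω | Y ω ≤ x ∧ Y ω ≤ y} = {ω | Y ω ≤ x} := by
      ext ω
      simp only [Set.mem_setOf_eq, and_iff_left_iff_imp]
      exact fun h1 => h1.trans h
    rw [hs]
    have h1 := toReal_prob_le_one P {ω | Y ω ≤ y}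
    have h2 : 0 ≤ (P {ω | Y ω ≤ x}).toReal := ENNReal.toReal_nonneg
    nlinarith
  · have hs : {ω | Y ω ≤ x ∧ Y ω ≤ y} = {ω | Y ω ≤ y} := by
      ext ω
      simp only [Set.mem_setOf_eq, and_iff_right_iff_imp]
      exact fun h1 => h1.trans h
    rw [hs]
    have h1 := toReal_prob_le_one P {ω | Y ω ≤ x}
    have h2 : 0 ≤ (P {ω | Y ω ≤ y}).toReal := ENNReal.toReal_nonneg
    nlinarith

private lemma Hfun_nonneg_of_assoc (P : Measure Ω') [IsProbabilityMeasure P] {Y Z : Ω' → ℝ}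
    (hY : Measurable Y) (hZ : Measurable Z) (h : AssociatedPair P Y Z) (x y : ℝ) :
    0 ≤ Hfun P Y Z x y := by
  have hf : BddMono (fun v : Fin 2 → ℝ => if v 0 ≤ x then (-1:ℝ) else 0) := by
    refine ⟨Measurable.ite (measurableSet_le (measurable_pi_apply 0) measurable_const)
      measurable_const measurable_const,
      ⟨1, fun v => by
        show |if v 0 ≤ x then (-1:ℝ) else 0| ≤ 1
        split_ifs <;> norm_num⟩, ?_⟩
    intro v w hvw
    show (if v 0 ≤ x then (-1:ℝ) else 0) ≤ (if w 0 ≤ x then (-1:ℝ) else 0)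
    by_cases h2 : w 0 ≤ x
    · rw [if_pos ((hvw 0).trans h2), if_pos h2]
    · rw [if_neg h2]; split_ifs <;> norm_num
  have hg : BddMono (fun v : Fin 2 → ℝ => if v 1 ≤ y then (-1:ℝ) else 0) := by
    refine ⟨Measurable.ite (measurableSet_le (measurable_pi_apply 1) measurable_const)
      measurable_const measurable_const,
      ⟨1, fun v => by
        show |if v 1 ≤ y then (-1:ℝ) else 0| ≤ 1
        split_ifs <;> norm_num⟩, ?_⟩
    intro v w hvw
    show (if v 1 ≤ y then (-1:ℝ) else 0) ≤ (if w 1 ≤ y then (-1:ℝ) else 0)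
    by_cases h2 : w 1 ≤ y
    · rw [if_pos ((hvw 1).trans h2), if_pos h2]
    · rw [if_neg h2]; split_ifs <;> norm_num
  have h0 := h _ _ hf hg
  simp only [Matrix.cons_val_zero, Matrix.cons_val_one, Matrix.head_cons] at h0
  have hcov : cov P (fun ω => if Y ω ≤ x then (-1:ℝ) else 0)
      (fun ω => if Z ω ≤ y then (-1:ℝ) else 0)
      = (∫ ω, (if Y ω ≤ x then (1:ℝ) else 0) * (if Z ω ≤ y then (1:ℝ) else 0) ∂P)
        - (∫ ω, (if Y ω ≤ x then (1:ℝ) else 0) ∂P) * (∫ ω, (if Z ω ≤ y then (1:ℝ) else 0) ∂P) := by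
    unfold cov
    have e1 : (fun ω => (if Y ω ≤ x then (-1:ℝ) else 0) * (if Z ω ≤ y then (-1:ℝ) else 0))
        = fun ω => (if Y ω ≤ x then (1:ℝ) else 0) * (if Z ω ≤ y then (1:ℝ) else 0) := by
      funext ω; split_ifs <;> ring
    have e2 : (fun ω => if Y ω ≤ x then (-1:ℝ) else 0)
        = fun ω => -(if Y ω ≤ x then (1:ℝ) else 0) := by
      funext ω; split_ifs <;> ring
    have e3 : (fun ω => if Z ω ≤ y then (-1:ℝ) else 0)
        = fun ω => -(if Z ω ≤ y then (1:ℝ) else 0) := by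
      funext ω; split_ifs <;> ring
    rw [e1, e2, e3, integral_neg, integral_neg]
    ring
  rw [Hfun_eq_cov P hY hZ x y, ← hcov]
  exact h0

private lemma Hfun_meas (P : Measure Ω') [IsProbabilityMeasure P] {Y Z : Ω' → ℝ}
    (hY : Measurable Y) (hZ : Measurable Z) :
    Measurable fun p : ℝ × ℝ => Hfun P Y Z p.1 p.2 := by
  have h2 : Measurable fun p : ℝ × ℝ => (P {ω | Y ω ≤ p.1 ∧ Z ω ≤ p.2}).toReal := by
    have hs : MeasurableSet {q : (ℝ × ℝ) × Ω' | Y q.2 ≤ q.1.1 ∧ Z q.2 ≤ q.1.2} :=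
      (measurableSet_le (hY.comp measurable_snd) (measurable_fst.comp measurable_fst)).inter
        (measurableSet_le (hZ.comp measurable_snd) (measurable_snd.comp measurable_fst))
    exact (measurable_measure_prodMk_left hs).ennreal_toReal
  have h3 : Measurable fun p : ℝ × ℝ => (P {ω | Y ω ≤ p.1}).toReal := by
    have hs : MeasurableSet {q : (ℝ × ℝ) × Ω' | Y q.2 ≤ q.1.1} :=
      measurableSet_le (hY.comp measurable_snd) (measurable_fst.comp measurable_fst)
    exact (measurable_measure_prodMk_left hs).ennreal_toReal
  have h4 : Measurable fun p : ℝ × ℝ => (P {ω | Z ω ≤ p.2}).toReal := by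
    have hs : MeasurableSet {q : (ℝ × ℝ) × Ω' | Z q.2 ≤ q.1.2} :=
      measurableSet_le (hZ.comp measurable_snd) (measurable_snd.comp measurable_fst)
    exact (measurable_measure_prodMk_left hs).ennreal_toReal
  exact h2.sub (h3.mul h4)

private lemma J_eq (P : Measure Ω') [IsProbabilityMeasure P] {Y Z : Ω' → ℝ}
    (hY : Measurable Y) (hZ : Measurable Z)
    (hpos : ∀ x y, 0 ≤ Hfun P Y Z x y) {a : ℝ} (ha : 0 < a) :
    ∫⁻ x in Set.Ioc (-a) a, ∫⁻ y in Set.Ioc (-a) a, ENNReal.ofReal (Hfun P Y Z x y)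
      = ENNReal.ofReal (∫ x in Set.Ioc (-a) a, ∫ y in Set.Ioc (-a) a, Hfun P Y Z x y) := by
  haveI : IsFiniteMeasure (volume.restrict (Set.Ioc (-a) a)) := finMeasIoc
  set I := Set.Ioc (-a) a with hIdef
  have hmeas := Hfun_meas P hY hZ
  have hint : ∀ x : ℝ, Integrable (fun y => Hfun P Y Z x y) (volume.restrict I) := fun x =>
    bdd_integrable ((hmeas.comp (measurable_prodMk_left)).aestronglyMeasurable)
      (C := 1) (fun y => Hfun_abs_le_one P Y Z x y)
  have inner : ∀ x : ℝ, ∫⁻ y in I, ENNReal.ofReal (Hfun P Y Z x y)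
      = ENNReal.ofReal (∫ y in I, Hfun P Y Z x y) := fun x =>
    (MeasureTheory.ofReal_integral_eq_lintegral_ofReal (hint x)
      (Filter.Eventually.of_forall fun y => hpos x y)).symm
  rw [lintegral_congr inner]
  have hG : StronglyMeasurable fun x => ∫ y in I, Hfun P Y Z x y :=
    hmeas.stronglyMeasurable.integral_prod_right'
  have hGbd : ∀ x, |∫ y in I, Hfun P Y Z x y| ≤ ((volume : Measure ℝ) I).toReal := by
    intro x
    calc |∫ y in I, Hfun P Y Z x y| = ‖∫ y in I, Hfun P Y Z x y‖ := (Real.norm_eq_abs _).symm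
      _ ≤ ∫ y in I, ‖Hfun P Y Z x y‖ := norm_integral_le_integral_norm _
      _ = ∫ y in I, |Hfun P Y Z x y| := by simp [Real.norm_eq_abs]
      _ ≤ ∫ y in I, (1:ℝ) := by
          apply integral_mono (hint x).abs (integrable_const 1)
          exact fun y => Hfun_abs_le_one P Y Z x y
      _ = ((volume : Measure ℝ) I).toReal := by
          rw [setIntegral_const, measureReal_def, smul_eq_mul, mul_one]
  rw [← MeasureTheory.ofReal_integral_eq_lintegral_ofReal
    (bdd_integrable hG.aestronglyMeasurable hGbd)
    (Filter.Eventually.of_forall fun x => integral_nonneg fun y => hpos x y)]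

private lemma cs_integral (Q : Measure Ω') [IsProbabilityMeasure Q] {u v : Ω' → ℝ}
    (hu : Measurable u) (hv : Measurable v) {C : ℝ}
    (hbu : ∀ q, |u q| ≤ C) (hbv : ∀ q, |v q| ≤ C) :
    ∫ q, u q * v q ∂Q ≤ (∫ q, u q ^ 2 ∂Q) ^ (1/2 : ℝ) * (∫ q, v q ^ 2 ∂Q) ^ (1/2 : ℝ) := by
  have h2 : (2:ℝ).HolderConjugate 2 := Real.holderConjugate_iff.mpr ⟨by norm_num, by norm_num⟩
  have hu2 : MemLp u (ENNReal.ofReal 2) Q :=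
    MemLp.of_bound hu.aestronglyMeasurable C
      (Filter.Eventually.of_forall fun q => by rw [Real.norm_eq_abs]; exact hbu q)
  have hv2 : MemLp v (ENNReal.ofReal 2) Q :=
    MemLp.of_bound hv.aestronglyMeasurable C
      (Filter.Eventually.of_forall fun q => by rw [Real.norm_eq_abs]; exact hbv q)
  have hCnn : ∀ q : Ω', (0:ℝ) ≤ C := fun q => (abs_nonneg _).trans (hbu q)
  have huv : Integrable (fun q => u q * v q) Q :=
    bdd_integrable (hu.mul hv).aestronglyMeasurable (C := C * C) fun q => by
      rw [abs_mul]
      exact mul_le_mul (hbu q) (hbv q) (abs_nonneg _) ((abs_nonneg _).trans (hbu q))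
  have hnuv : Integrable (fun q => ‖u q‖ * ‖v q‖) Q :=
    bdd_integrable (hu.norm.mul hv.norm).aestronglyMeasurable (C := C * C) fun q => by
      rw [abs_mul, abs_norm, abs_norm, Real.norm_eq_abs, Real.norm_eq_abs]
      exact mul_le_mul (hbu q) (hbv q) (abs_nonneg _) ((abs_nonneg _).trans (hbu q))
  have hrpow : ∀ t : ℝ, ‖t‖ ^ (2:ℝ) = t ^ 2 := fun t => by
    rw [show (2:ℝ) = ((2:ℕ):ℝ) by norm_num, Real.rpow_natCast, Real.norm_eq_abs, sq_abs]
  calc ∫ q, u q * v q ∂Q ≤ ∫ q, ‖u q‖ * ‖v q‖ ∂Q := by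
        apply integral_mono huv hnuv
        intro q
        calc u q * v q ≤ |u q * v q| := le_abs_self _
          _ = ‖u q‖ * ‖v q‖ := by rw [abs_mul, Real.norm_eq_abs, Real.norm_eq_abs]
    _ ≤ (∫ q, ‖u q‖ ^ (2:ℝ) ∂Q) ^ (1/2 : ℝ) * (∫ q, ‖v q‖ ^ (2:ℝ) ∂Q) ^ (1/2 : ℝ) :=
        MeasureTheory.integral_mul_norm_le_Lp_mul_Lq h2 hu2 hv2
    _ = (∫ q, u q ^ 2 ∂Q) ^ (1/2 : ℝ) * (∫ q, v q ^ 2 ∂Q) ^ (1/2 : ℝ) := by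
        congr 2
        · apply integral_congr_ae
          exact Filter.Eventually.of_forall fun q => hrpow (u q)
        · apply integral_congr_ae
          exact Filter.Eventually.of_forall fun q => hrpow (v q)

end Statement6Aux

/-- Cauchy–Schwarz inequality for the coefficient `I^A_α`. -/
theorem statement6 {Ω : Type*} [MeasurableSpace Ω] (P : Measure Ω) [IsProbabilityMeasure P]
    (Xi Xj : Ω → ℝ) (hmi : Measurable Xi) (hmj : Measurable Xj)
    (hassoc : AssociatedPair P Xi Xj)
    (A α : ℝ) (hA : 0 < A) (hα0 : 0 < α) (hα2 : α < 2) :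
    Icoef P Xi Xj A α ≤ Icoef P Xi Xi A α ^ (1 / 2 : ℝ) * Icoef P Xj Xj A α ^ (1 / 2 : ℝ) := by
  have hposij : ∀ x y, 0 ≤ Hfun P Xi Xj x y := Hfun_nonneg_of_assoc P hmi hmj hassoc
  unfold Icoef
  refine iSup_le fun s => ?_
  set a : ℝ := (s : ℝ) with hadef
  have ha : 0 < a := lt_of_lt_of_le hA s.2
  have hJij := J_eq P hmi hmj hposij ha
  have hJii := J_eq P hmi hmi (Hfun_self_nonneg P Xi) ha
  have hJjj := J_eq P hmj hmj (Hfun_self_nonneg P Xj) ha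
  have hdij := double_eq P hmi hmj ha
  have hdii := double_eq P hmi hmi ha
  have hdjj := double_eq P hmj hmj ha
  set Rij := ∫ x in Set.Ioc (-a) a, ∫ y in Set.Ioc (-a) a, Hfun P Xi Xj x y with hRijdef
  set Rii := ∫ x in Set.Ioc (-a) a, ∫ y in Set.Ioc (-a) a, Hfun P Xi Xi x y with hRiidef
  set Rjj := ∫ x in Set.Ioc (-a) a, ∫ y in Set.Ioc (-a) a, Hfun P Xj Xj x y with hRjjdef
  -- nonnegativity of the real quantities
  have hRii0 : 0 ≤ Rii := by
    rw [hdii]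
    have h0 : 0 ≤ ∫ q : Ω × Ω,
        (trunc a (Xi q.2) - trunc a (Xi q.1)) * (trunc a (Xi q.2) - trunc a (Xi q.1))
        ∂(P.prod P) := integral_nonneg fun q => mul_self_nonneg _
    linarith
  have hRjj0 : 0 ≤ Rjj := by
    rw [hdjj]
    have h0 : 0 ≤ ∫ q : Ω × Ω,
        (trunc a (Xj q.2) - trunc a (Xj q.1)) * (trunc a (Xj q.2) - trunc a (Xj q.1))
        ∂(P.prod P) := integral_nonneg fun q => mul_self_nonneg _
    linarith
  -- Cauchy-Schwarz on the product space
  have hmu : Measurable (fun q : Ω × Ω => trunc a (Xi q.2) - trunc a (Xi q.1)) :=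
    (meas_trunc.comp (hmi.comp measurable_snd)).sub (meas_trunc.comp (hmi.comp measurable_fst))
  have hmv : Measurable (fun q : Ω × Ω => trunc a (Xj q.2) - trunc a (Xj q.1)) :=
    (meas_trunc.comp (hmj.comp measurable_snd)).sub (meas_trunc.comp (hmj.comp measurable_fst))
  have hbu : ∀ q : Ω × Ω, |trunc a (Xi q.2) - trunc a (Xi q.1)| ≤ a + a := fun q =>
    (abs_sub _ _).trans (add_le_add (abs_trunc_le ha _) (abs_trunc_le ha _))
  have hbv : ∀ q : Ω × Ω, |trunc a (Xj q.2) - trunc a (Xj q.1)| ≤ a + a := fun q =>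
    (abs_sub _ _).trans (add_le_add (abs_trunc_le ha _) (abs_trunc_le ha _))
  have hcs : ∫ q : Ω × Ω,
        (trunc a (Xi q.2) - trunc a (Xi q.1)) * (trunc a (Xj q.2) - trunc a (Xj q.1))
        ∂(P.prod P)
      ≤ (∫ q : Ω × Ω, (trunc a (Xi q.2) - trunc a (Xi q.1)) ^ 2 ∂(P.prod P)) ^ (1/2 : ℝ) *
        (∫ q : Ω × Ω, (trunc a (Xj q.2) - trunc a (Xj q.1)) ^ 2 ∂(P.prod P)) ^ (1/2 : ℝ) :=
    cs_integral (P.prod P) hmu hmv (C := a + a) hbu hbv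
  have huu : ∫ q : Ω × Ω, (trunc a (Xi q.2) - trunc a (Xi q.1)) ^ 2 ∂(P.prod P)
      = ∫ q : Ω × Ω,
        (trunc a (Xi q.2) - trunc a (Xi q.1)) * (trunc a (Xi q.2) - trunc a (Xi q.1))
        ∂(P.prod P) :=
    integral_congr_ae (Filter.Eventually.of_forall fun q => by ring)
  have hvv : ∫ q : Ω × Ω, (trunc a (Xj q.2) - trunc a (Xj q.1)) ^ 2 ∂(P.prod P)
      = ∫ q : Ω × Ω,
        (trunc a (Xj q.2) - trunc a (Xj q.1)) * (trunc a (Xj q.2) - trunc a (Xj q.1))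
        ∂(P.prod P) :=
    integral_congr_ae (Filter.Eventually.of_forall fun q => by ring)
  have h2Rii : ∫ q : Ω × Ω, (trunc a (Xi q.2) - trunc a (Xi q.1)) ^ 2 ∂(P.prod P)
      = 2 * Rii := by rw [huu, hdii]; ring
  have h2Rjj : ∫ q : Ω × Ω, (trunc a (Xj q.2) - trunc a (Xj q.1)) ^ 2 ∂(P.prod P)
      = 2 * Rjj := by rw [hvv, hdjj]; ring
  have key_real : Rij ≤ Rii ^ (1/2 : ℝ) * Rjj ^ (1/2 : ℝ) := by
    have h22 : (2:ℝ) ^ (1/2:ℝ) * (2:ℝ) ^ (1/2:ℝ) = 2 := by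
      rw [← Real.rpow_add (by norm_num : (0:ℝ) < 2)]; norm_num
    calc Rij = (1/2) * ∫ q : Ω × Ω,
          (trunc a (Xi q.2) - trunc a (Xi q.1)) * (trunc a (Xj q.2) - trunc a (Xj q.1))
          ∂(P.prod P) := hdij
      _ ≤ (1/2) * ((2 * Rii) ^ (1/2 : ℝ) * (2 * Rjj) ^ (1/2 : ℝ)) := by
          rw [← h2Rii, ← h2Rjj]
          exact mul_le_mul_of_nonneg_left hcs (by norm_num)
      _ = (1/2) * ((2:ℝ) ^ (1/2:ℝ) * (2:ℝ) ^ (1/2:ℝ)) * (Rii ^ (1/2 : ℝ) * Rjj ^ (1/2 : ℝ)) := by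
          rw [Real.mul_rpow (by norm_num) hRii0, Real.mul_rpow (by norm_num) hRjj0]
          ring
      _ = Rii ^ (1/2 : ℝ) * Rjj ^ (1/2 : ℝ) := by rw [h22]; ring
  -- pass to ENNReal
  have hw : (0:ℝ) < a ^ (α - 2) := Real.rpow_pos_of_pos ha _
  have hstep : ENNReal.ofReal (a ^ (α - 2)) * ENNReal.ofReal Rij
      ≤ (ENNReal.ofReal (a ^ (α - 2)) * ENNReal.ofReal Rii) ^ (1/2 : ℝ) *
        (ENNReal.ofReal (a ^ (α - 2)) * ENNReal.ofReal Rjj) ^ (1/2 : ℝ) := by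
    rw [← ENNReal.ofReal_mul hw.le, ← ENNReal.ofReal_mul hw.le, ← ENNReal.ofReal_mul hw.le,
      ENNReal.ofReal_rpow_of_nonneg (mul_nonneg hw.le hRii0) (by norm_num),
      ENNReal.ofReal_rpow_of_nonneg (mul_nonneg hw.le hRjj0) (by norm_num),
      ← ENNReal.ofReal_mul (Real.rpow_nonneg (mul_nonneg hw.le hRii0) _)]
    apply ENNReal.ofReal_le_ofReal
    rw [Real.mul_rpow hw.le hRii0, Real.mul_rpow hw.le hRjj0]
    have hww : (a ^ (α - 2)) ^ (1/2:ℝ) * (a ^ (α - 2)) ^ (1/2:ℝ) = a ^ (α - 2) := by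
      rw [← Real.rpow_add hw]; norm_num
    calc a ^ (α - 2) * Rij ≤ a ^ (α - 2) * (Rii ^ (1/2:ℝ) * Rjj ^ (1/2:ℝ)) :=
          mul_le_mul_of_nonneg_left key_real hw.le
      _ = (a ^ (α - 2)) ^ (1/2:ℝ) * Rii ^ (1/2:ℝ) *
          ((a ^ (α - 2)) ^ (1/2:ℝ) * Rjj ^ (1/2:ℝ)) := by
          have hre : (a ^ (α - 2)) ^ (1/2:ℝ) * Rii ^ (1/2:ℝ) *
              ((a ^ (α - 2)) ^ (1/2:ℝ) * Rjj ^ (1/2:ℝ))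
              = ((a ^ (α - 2)) ^ (1/2:ℝ) * (a ^ (α - 2)) ^ (1/2:ℝ)) *
                (Rii ^ (1/2:ℝ) * Rjj ^ (1/2:ℝ)) := by ring
          rw [hre, hww]
  calc ENNReal.ofReal (a ^ (α - 2)) *
        ∫⁻ x in Set.Ioc (-a) a, ∫⁻ y in Set.Ioc (-a) a, ENNReal.ofReal (Hfun P Xi Xj x y)
      = ENNReal.ofReal (a ^ (α - 2)) * ENNReal.ofReal Rij := by rw [hJij]
    _ ≤ (ENNReal.ofReal (a ^ (α - 2)) * ENNReal.ofReal Rii) ^ (1/2 : ℝ) *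
        (ENNReal.ofReal (a ^ (α - 2)) * ENNReal.ofReal Rjj) ^ (1/2 : ℝ) := hstep
    _ = (ENNReal.ofReal (a ^ (α - 2)) *
          ∫⁻ x in Set.Ioc (-a) a, ∫⁻ y in Set.Ioc (-a) a,
            ENNReal.ofReal (Hfun P Xi Xi x y)) ^ (1/2 : ℝ) *
        (ENNReal.ofReal (a ^ (α - 2)) *
          ∫⁻ x in Set.Ioc (-a) a, ∫⁻ y in Set.Ioc (-a) a,
            ENNReal.ofReal (Hfun P Xj Xj x y)) ^ (1/2 : ℝ) := by rw [hJii, hJjj]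
    _ ≤ (⨆ b : {b : ℝ // A ≤ b}, ENNReal.ofReal ((b : ℝ) ^ (α - 2)) *
          ∫⁻ x in Set.Ioc (-(b : ℝ)) (b : ℝ), ∫⁻ y in Set.Ioc (-(b : ℝ)) (b : ℝ),
            ENNReal.ofReal (Hfun P Xi Xi x y)) ^ (1/2 : ℝ) *
        (⨆ b : {b : ℝ // A ≤ b}, ENNReal.ofReal ((b : ℝ) ^ (α - 2)) *
          ∫⁻ x in Set.Ioc (-(b : ℝ)) (b : ℝ), ∫⁻ y in Set.Ioc (-(b : ℝ)) (b : ℝ),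
            ENNReal.ofReal (Hfun P Xj Xj x y)) ^ (1/2 : ℝ) := by
        refine mul_le_mul' (ENNReal.rpow_le_rpow ?_ (by norm_num))
          (ENNReal.rpow_le_rpow ?_ (by norm_num))
        · exact le_iSup (fun b : {b : ℝ // A ≤ b} => ENNReal.ofReal ((b : ℝ) ^ (α - 2)) *
            ∫⁻ x in Set.Ioc (-(b : ℝ)) (b : ℝ), ∫⁻ y in Set.Ioc (-(b : ℝ)) (b : ℝ),
              ENNReal.ofReal (Hfun P Xi Xi x y)) s
        · exact le_iSup (fun b : {b : ℝ // A ≤ b} => ENNReal.ofReal ((b : ℝ) ^ (α - 2)) *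
            ∫⁻ x in Set.Ioc (-(b : ℝ)) (b : ℝ), ∫⁻ y in Set.Ioc (-(b : ℝ)) (b : ℝ),
              ENNReal.ofReal (Hfun P Xj Xj x y)) s

end Paper
end
end

section
/- Let {X_j}_{j≥1} be a strictly stationary sequence of square-integrable real random variables and set c_j = Cov(X_1, X_j) for j ≥ 2. Then for all integers m, N ≥ 1, with n = m·N: (1/2)·( Var(S_n) − m·Var(S_N) ) = Σ_{j=2}^{N} (m−1)(j−1) c_j + Σ_{j=N+1}^{n} (n−j+1) c_j. If moreover c_j ≥ 0 for all j ≥ 2 (as holds when the sequence is associated), then (1/2)·( Var(S_n) − m·Var(S_N) ) ≤ (n/N) · Σ_{i=1}^{N} Σ_{j=i+1}^{n} c_j. -/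
open MeasureTheory Filter Topology

noncomputable section

namespace Paper

variable {Ω : Type*} [MeasurableSpace Ω]

/-! ### Auxiliary lemmas for Statement 13 -/

lemma cov_comm' (P : Measure Ω) (f g : Ω → ℝ) : cov P f g = cov P g f := by
  simp [cov, mul_comm]

lemma integrable_mul' {P : Measure Ω} [IsProbabilityMeasure P] {f g : Ω → ℝ}
    (hfm : Measurable f) (hgm : Measurable g)
    (hf : MemLp f 2 P) (hg : MemLp g 2 P) : Integrable (fun ω => f ω * g ω) P := by
  have h := hf.integrable_sq.add hg.integrable_sq
  refine h.mono' ((hfm.mul hgm).aestronglyMeasurable) ?_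
  filter_upwards with ω
  rw [Real.norm_eq_abs, abs_mul]
  show |f ω| * |g ω| ≤ f ω ^ 2 + g ω ^ 2
  nlinarith [sq_nonneg (|f ω| - |g ω|), sq_abs (f ω), sq_abs (g ω),
    abs_nonneg (f ω), abs_nonneg (g ω)]

lemma cov_sum_sum (P : Measure Ω) [IsProbabilityMeasure P] (X : ℕ → Ω → ℝ)
    (hmeas : ∀ j, Measurable (X j)) (hL2 : ∀ j, MemLp (X j) 2 P) (s t : Finset ℕ) :
    cov P (fun ω => ∑ i ∈ s, X i ω) (fun ω => ∑ j ∈ t, X j ω)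
      = ∑ i ∈ s, ∑ j ∈ t, cov P (X i) (X j) := by
  have hint : ∀ i j : ℕ, Integrable (fun ω => X i ω * X j ω) P := fun i j =>
    integrable_mul' (hmeas i) (hmeas j) (hL2 i) (hL2 j)
  have hi : ∀ i : ℕ, Integrable (X i) P := fun i => (hL2 i).integrable one_le_two
  unfold cov
  have h1 : (∫ ω, (∑ i ∈ s, X i ω) * (∑ j ∈ t, X j ω) ∂P)
      = ∑ i ∈ s, ∑ j ∈ t, ∫ ω, X i ω * X j ω ∂P := by
    have h0 : ∀ ω, (∑ i ∈ s, X i ω) * (∑ j ∈ t, X j ω)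
        = ∑ i ∈ s, ∑ j ∈ t, X i ω * X j ω := by
      intro ω; rw [Finset.sum_mul_sum]
    simp_rw [h0]
    rw [integral_finset_sum _ (fun i _ => integrable_finset_sum _ (fun j _ => hint i j))]
    exact Finset.sum_congr rfl fun i _ => integral_finset_sum _ (fun j _ => hint i j)
  rw [h1, integral_finset_sum _ (fun i _ => hi i), integral_finset_sum _ (fun j _ => hi j),
    Finset.sum_mul_sum, ← Finset.sum_sub_distrib]
  exact Finset.sum_congr rfl fun i _ => by rw [← Finset.sum_sub_distrib]

lemma stat_cov (P : Measure Ω) (X : ℕ → Ω → ℝ) (hmeas : ∀ j, Measurable (X j))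
    (hstat : StrictlyStationary P X) (k a b : ℕ) :
    cov P (X (1 + k + a)) (X (1 + k + b)) = cov P (X (1 + a)) (X (1 + b)) := by
  set M := max a b + 1 with hM
  set ia : Fin M := ⟨a, by omega⟩
  set ib : Fin M := ⟨b, by omega⟩
  have hTk : ∀ k' : ℕ, Measurable (fun ω (i : Fin M) => X (1 + k' + (i : ℕ)) ω) := by
    intro k'; exact measurable_pi_lambda _ fun i => hmeas _
  have key : ∀ (F : (Fin M → ℝ) → ℝ), Measurable F →
      (∫ ω, F (fun i => X (1 + k + (i : ℕ)) ω) ∂P)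
        = ∫ ω, F (fun i => X (1 + (i : ℕ)) ω) ∂P := by
    intro F hF
    have h1 : (∫ ω, F (fun i => X (1 + k + (i : ℕ)) ω) ∂P)
        = ∫ v, F v ∂(P.map (fun ω (i : Fin M) => X (1 + k + (i : ℕ)) ω)) :=
      (integral_map (hTk k).aemeasurable hF.aestronglyMeasurable).symm
    have h2 : (∫ ω, F (fun i => X (1 + (i : ℕ)) ω) ∂P)
        = ∫ v, F v ∂(P.map (fun ω (i : Fin M) => X (1 + (i : ℕ)) ω)) :=
      (integral_map (measurable_pi_lambda _ fun i => hmeas _).aemeasurable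
        hF.aestronglyMeasurable).symm
    rw [h1, h2, hstat k M]
    rfl
  have e1 := key (fun v => v ia * v ib) ((measurable_pi_apply ia).mul (measurable_pi_apply ib))
  have e2 := key (fun v => v ia) (measurable_pi_apply ia)
  have e3 := key (fun v => v ib) (measurable_pi_apply ib)
  simpa [cov] using congrArg₂ (fun x y => x - y) e1 (congrArg₂ (· * ·) e2 e3)

lemma refl_sum (c : ℕ → ℝ) (n : ℕ) :
    ∑ j ∈ Finset.Icc 1 n, c (n + 1 - j) = ∑ d ∈ Finset.Icc 1 n, c d := by
  refine Finset.sum_nbij' (i := fun j => n + 1 - j) (j := fun d => n + 1 - d)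
    ?_ ?_ ?_ ?_ ?_ <;> intros <;> simp_all [Finset.mem_Icc] <;> try omega

lemma sq_sum (c : ℕ → ℝ) (n : ℕ) :
    ∑ i ∈ Finset.Icc 1 n, ∑ j ∈ Finset.Icc 1 n, c (max i j - min i j)
      = n * c 0 + 2 * ∑ d ∈ Finset.Icc 1 (n - 1), ((n : ℝ) - d) * c d := by
  induction n with
  | zero => simp
  | succ n ih =>
    have hins : Finset.Icc 1 (n + 1) = insert (n + 1) (Finset.Icc 1 n) := by
      ext x; simp [Finset.mem_Icc]; omega
    have hnot : (n + 1) ∉ Finset.Icc 1 n := by simp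
    rw [hins, Finset.sum_insert hnot]
    have hrow : ∑ j ∈ insert (n+1) (Finset.Icc 1 n), c (max (n+1) j - min (n+1) j)
        = c 0 + ∑ j ∈ Finset.Icc 1 n, c (n + 1 - j) := by
      rw [Finset.sum_insert hnot]
      congr 1
      · simp
      · apply Finset.sum_congr rfl; intro j hj; simp only [Finset.mem_Icc] at hj
        congr 1; omega
    have hcols : ∀ i ∈ Finset.Icc 1 n, ∑ j ∈ insert (n+1) (Finset.Icc 1 n),
          c (max i j - min i j)
        = c (n + 1 - i) + ∑ j ∈ Finset.Icc 1 n, c (max i j - min i j) := by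
      intro i hi; simp only [Finset.mem_Icc] at hi
      rw [Finset.sum_insert hnot]
      congr 2; omega
    rw [hrow, Finset.sum_congr rfl hcols, Finset.sum_add_distrib, ih, refl_sum c n]
    have hlast : ∑ d ∈ Finset.Icc 1 n, ((n : ℝ) - d) * c d
        = ∑ d ∈ Finset.Icc 1 (n - 1), ((n : ℝ) - d) * c d := by
      rcases Nat.eq_zero_or_pos n with h | h
      · subst h; simp
      · rw [show Finset.Icc 1 n = insert n (Finset.Icc 1 (n-1)) by
            ext x; simp [Finset.mem_Icc]; omega,
          Finset.sum_insert (by simp; omega)]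
        simp
    have hthis : ∑ d ∈ Finset.Icc 1 n, (((n:ℝ) + 1) - d) * c d
        = ∑ d ∈ Finset.Icc 1 n, ((n : ℝ) - d) * c d + ∑ d ∈ Finset.Icc 1 n, c d := by
      rw [← Finset.sum_add_distrib]; apply Finset.sum_congr rfl; intros; ring
    push_cast
    rw [hthis, hlast]
    ring

lemma shift_sum (f : ℕ → ℝ) (a b : ℕ) (ha : 2 ≤ a) :
    ∑ j ∈ Finset.Icc a b, f j = ∑ d ∈ Finset.Icc (a-1) (b-1), f (d+1) := by
  refine Finset.sum_nbij' (i := fun j => j - 1) (j := fun d => d + 1)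
    ?_ ?_ ?_ ?_ ?_ <;> intros j hj <;> simp_all [Finset.mem_Icc] <;>
    first
      | omega
      | (congr 1; omega)

lemma sum_Icc_split (f : ℕ → ℝ) (a b : ℕ) (h : a ≤ b) :
    ∑ d ∈ Finset.Icc 1 b, f d
      = ∑ d ∈ Finset.Icc 1 a, f d + ∑ d ∈ Finset.Icc (a+1) b, f d := by
  rw [← Finset.sum_union (by simp [Finset.disjoint_left, Finset.mem_Icc]; omega)]
  apply Finset.sum_congr _ (fun _ _ => rfl)
  ext x; simp [Finset.mem_Icc]; omega


/-- the variance decomposition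
`(1/2)(Var S_n − m Var S_N) = Σ_{j=2}^{N}(m−1)(j−1)c_j + Σ_{j=N+1}^{n}(n−j+1)c_j` for
`n = mN`, and the resulting bound `≤ (n/N) Σ_{i=1}^{N} Σ_{j=i+1}^{n} c_j` when `c_j ≥ 0`. -/
theorem statement13 {Ω : Type*} [MeasurableSpace Ω] (P : Measure Ω) [IsProbabilityMeasure P]
    (X : ℕ → Ω → ℝ) (hmeas : ∀ j, Measurable (X j))
    (hL2 : ∀ j, MemLp (X j) 2 P)
    (hstat : StrictlyStationary P X)
    (m N : ℕ) (hm : 1 ≤ m) (hN : 1 ≤ N) :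
    (1 / 2 : ℝ) *
        (cov P (partialSum X (m * N)) (partialSum X (m * N))
          - m * cov P (partialSum X N) (partialSum X N))
      = (∑ j ∈ Finset.Icc 2 N, ((m : ℝ) - 1) * ((j : ℝ) - 1) * cov P (X 1) (X j))
        + ∑ j ∈ Finset.Icc (N + 1) (m * N),
            (((m * N : ℕ) : ℝ) - (j : ℝ) + 1) * cov P (X 1) (X j) ∧
    ((∀ j : ℕ, 2 ≤ j → 0 ≤ cov P (X 1) (X j)) →
      (1 / 2 : ℝ) *
          (cov P (partialSum X (m * N)) (partialSum X (m * N))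
            - m * cov P (partialSum X N) (partialSum X N))
        ≤ ((m * N : ℕ) : ℝ) / (N : ℝ) *
            ∑ i ∈ Finset.Icc 1 N, ∑ j ∈ Finset.Icc (i + 1) (m * N), cov P (X 1) (X j)) := by
  set n := m * N with hn
  set c : ℕ → ℝ := fun d => cov P (X 1) (X (1 + d)) with hc
  have hNn : N ≤ n := Nat.le_mul_of_pos_left N (by omega)
  -- covariance only depends on the gap
  have hkey : ∀ i j : ℕ, 1 ≤ i → i ≤ j → cov P (X i) (X j) = c (j - i) := by
    intro i j hi hij
    have h := stat_cov P X hmeas hstat (i-1) 0 (j-i)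
    rw [show 1 + (i-1) + 0 = i by omega, show 1 + (i-1) + (j-i) = j by omega] at h
    rw [h, hc]
  have hcov : ∀ i j : ℕ, 1 ≤ i → 1 ≤ j →
      cov P (X i) (X j) = c (max i j - min i j) := by
    intro i j hi hj
    rcases le_total i j with h | h
    · rw [hkey i j hi h]; congr 1; omega
    · rw [cov_comm', hkey j i hj h]; congr 1; omega
  have hc1 : ∀ j : ℕ, 1 ≤ j → cov P (X 1) (X j) = c (j - 1) := by
    intro j hj
    rw [hc]
    simp only
    rw [show 1 + (j - 1) = j by omega]
  -- variance formula
  have hvar : ∀ q : ℕ, cov P (partialSum X q) (partialSum X q)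
      = q * c 0 + 2 * ∑ d ∈ Finset.Icc 1 (q-1), ((q:ℝ) - d) * c d := by
    intro q
    have hps : partialSum X q = fun ω => ∑ i ∈ Finset.Icc 1 q, X i ω := rfl
    rw [hps, cov_sum_sum P X hmeas hL2, ← sq_sum c q]
    refine Finset.sum_congr rfl fun i hi => Finset.sum_congr rfl fun j hj => ?_
    simp only [Finset.mem_Icc] at hi hj
    exact hcov i j hi.1 hj.1
  -- rewrite the two RHS sums in terms of c
  have hS1 : ∑ j ∈ Finset.Icc 2 N, ((m : ℝ) - 1) * ((j : ℝ) - 1) * cov P (X 1) (X j)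
      = ∑ d ∈ Finset.Icc 1 (N-1), ((m : ℝ) - 1) * (d : ℝ) * c d := by
    rw [shift_sum _ 2 N (le_refl 2)]
    refine Finset.sum_congr rfl fun d hd => ?_
    simp only [Finset.mem_Icc] at hd
    rw [hc1 (d+1) (by omega)]
    push_cast
    ring_nf
  have hS2 : ∑ j ∈ Finset.Icc (N + 1) n, ((n : ℝ) - (j : ℝ) + 1) * cov P (X 1) (X j)
      = ∑ d ∈ Finset.Icc N (n-1), ((n : ℝ) - (d : ℝ)) * c d := by
    rw [shift_sum _ (N+1) n (by omega), show N + 1 - 1 = N from rfl]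
    refine Finset.sum_congr rfl fun d hd => ?_
    simp only [Finset.mem_Icc] at hd
    rw [hc1 (d+1) (by omega)]
    push_cast
    ring_nf
  -- split the long sum
  have hsplitA : ∑ d ∈ Finset.Icc 1 (n-1), ((n:ℝ) - d) * c d
      = ∑ d ∈ Finset.Icc 1 (N-1), ((n:ℝ) - d) * c d
        + ∑ d ∈ Finset.Icc N (n-1), ((n:ℝ) - d) * c d := by
    rw [sum_Icc_split _ (N-1) (n-1) (by omega), show N-1+1 = N by omega]
  have heq : (1 / 2 : ℝ) *
        (cov P (partialSum X n) (partialSum X n)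
          - m * cov P (partialSum X N) (partialSum X N))
      = (∑ j ∈ Finset.Icc 2 N, ((m : ℝ) - 1) * ((j : ℝ) - 1) * cov P (X 1) (X j))
        + ∑ j ∈ Finset.Icc (N + 1) n, ((n : ℝ) - (j : ℝ) + 1) * cov P (X 1) (X j) := by
    rw [hS1, hS2, hvar n, hvar N, hsplitA]
    have hdiff : ∑ d ∈ Finset.Icc 1 (N-1), ((n:ℝ) - d) * c d
        - (m : ℝ) * ∑ d ∈ Finset.Icc 1 (N-1), ((N:ℝ) - d) * c d
        = ∑ d ∈ Finset.Icc 1 (N-1), ((m : ℝ) - 1) * (d : ℝ) * c d := by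
      rw [Finset.mul_sum, ← Finset.sum_sub_distrib]
      refine Finset.sum_congr rfl fun d hd => ?_
      have hcast : (n : ℝ) = (m : ℝ) * (N : ℝ) := by rw [hn]; push_cast; ring
      rw [hcast]; ring
    have hcast : (n : ℝ) = (m : ℝ) * (N : ℝ) := by rw [hn]; push_cast; ring
    rw [← hdiff, hcast]
    ring
  refine ⟨heq, fun hpos => ?_⟩
  rw [heq]
  -- swap the double sum on the RHS
  have hswap : ∑ i ∈ Finset.Icc 1 N, ∑ j ∈ Finset.Icc (i + 1) n, cov P (X 1) (X j)
      = ∑ j ∈ Finset.Icc 1 n, ((min (j-1) N : ℕ) : ℝ) * cov P (X 1) (X j) := by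
    have h1 : ∀ i ∈ Finset.Icc 1 N, ∑ j ∈ Finset.Icc (i + 1) n, cov P (X 1) (X j)
        = ∑ j ∈ Finset.Icc 1 n, if i < j then cov P (X 1) (X j) else 0 := by
      intro i hi
      simp only [Finset.mem_Icc] at hi
      rw [show Finset.Icc (i+1) n = (Finset.Icc 1 n).filter (fun j => i < j) by
          ext x; simp [Finset.mem_Icc, Finset.mem_filter]; omega,
        Finset.sum_filter]
    rw [Finset.sum_congr rfl h1, Finset.sum_comm]
    refine Finset.sum_congr rfl fun j hj => ?_
    simp only [Finset.mem_Icc] at hj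
    rw [← Finset.sum_filter, Finset.sum_const,
      show (Finset.Icc 1 N).filter (fun i => i < j) = Finset.Icc 1 (min (j-1) N) by
        ext x; simp [Finset.mem_Icc, Finset.mem_filter]; omega,
      Nat.card_Icc, nsmul_eq_mul, Nat.add_sub_cancel]
  rw [hswap, sum_Icc_split _ N n hNn, sum_Icc_split _ 1 N hN, Finset.Icc_self,
    Finset.sum_singleton, show min (1-1) N = 0 by omega, Nat.cast_zero, zero_mul, zero_add,
    mul_add, Finset.mul_sum, Finset.mul_sum]
  refine add_le_add (Finset.sum_le_sum ?_) (Finset.sum_le_sum ?_)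
  · intro j hj
    simp only [Finset.mem_Icc] at hj
    have hg := hpos j hj.1
    rw [show min (j-1) N = j - 1 by omega, Nat.cast_sub (by omega), Nat.cast_one]
    have hm' : ((n:ℕ):ℝ)/(N:ℝ) = (m:ℝ) := by
      rw [hn]; push_cast; field_simp
    rw [hm']
    have hj2 : (2:ℝ) ≤ (j:ℝ) := by exact_mod_cast hj.1
    nlinarith [mul_nonneg (show (0:ℝ) ≤ (j:ℝ)-1 by linarith) hg]
  · intro j hj
    simp only [Finset.mem_Icc] at hj
    have hg := hpos j (by omega)
    rw [show min (j-1) N = N by omega]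
    have hNne : (N:ℝ) ≠ 0 := Nat.cast_ne_zero.mpr (by omega)
    have hdiv : ((n:ℕ):ℝ)/(N:ℝ) * ((N:ℝ) * cov P (X 1) (X j)) = (n:ℝ) * cov P (X 1) (X j) := by
      field_simp
    rw [hdiv]
    have hj2 : ((N:ℝ)+1) ≤ (j:ℝ) := by exact_mod_cast hj.1
    have hN1 : (1:ℝ) ≤ (N:ℝ) := by exact_mod_cast hN
    nlinarith [mul_nonneg (show (0:ℝ) ≤ (j:ℝ)-1 by linarith) hg]



end Paper
end
end
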